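/- arXiv:2209.10424 — 2 statements merged into one kernel-verified Lean document; each statement's English description precedes it below -/
import Mathlib

section
/- Let p be a positive integer and let f be analytic on D with power series f(z)=z^p + a_{p+1}z^{p+1} + ⋯ . Suppose f'(z)≠0 for all z∈D with z≠0 and Re(1 + z f''(z)/f'(z)) > 0 for all z∈D. Then there exists a starlike univalent function f0 on D such that f(z) = f0(z)^p for all z∈D. -/
open Complex Set MeasureTheory
open Metric Function intervalIntegral

noncomputable section

/-- The open unit disk in the complex plane. -/
def unitDisk : Set ℂ := {z : ℂ | ‖z‖ < 1}

/-- Integral of `g` along the segment from `0` to `z0`: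
`∫_0^{z0} g(ξ) dξ = ∫_0^1 z0 · g(t z0) dt`. -/
def segInt (g : ℂ → ℂ) (z0 : ℂ) : ℂ :=
  ∫ t in (0:ℝ)..1, z0 * g ((t : ℂ) * z0)

/-- The branch of `log f'` vanishing at the origin, evaluated at `z0`:
`log f'(z0) = ∫_0^{z0} f''(ξ)/f'(ξ) dξ`. -/
def logDerivAt (f : ℂ → ℂ) (z0 : ℂ) : ℂ :=
  segInt (fun ξ => deriv (deriv f) ξ / deriv f ξ) z0

/-- The class `F(λ,β)`: analytic `f` on the unit disk with `f(0)=0`, `f'(0)=1`,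
`f''(0)=2λ(1-β)`, nonvanishing derivative, and `Re(1 + z f''(z)/f'(z)) > β`. -/
def IsInF (lam beta : ℝ) (f : ℂ → ℂ) : Prop :=
  DifferentiableOn ℂ f unitDisk ∧ f 0 = 0 ∧ deriv f 0 = 1 ∧
    deriv (deriv f) 0 = 2 * (lam : ℂ) * (1 - (beta : ℂ)) ∧
    (∀ z ∈ unitDisk, deriv f z ≠ 0) ∧
    (∀ z ∈ unitDisk, beta < (1 + z * deriv (deriv f) z / deriv f z).re)

/-- The region of variability `V(z0,λ,β) = {log f'(z0) : f ∈ F(λ,β)}`. -/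
def V (z0 : ℂ) (lam beta : ℝ) : Set ℂ :=
  {w : ℂ | ∃ f : ℂ → ℂ, IsInF lam beta f ∧ logDerivAt f z0 = w}

/-- A starlike univalent function on the unit disk, normalized by
`g(0) = 0` and `g'(0) = 1`. -/
def IsStarlikeUnivalent (g : ℂ → ℂ) : Prop :=
  DifferentiableOn ℂ g unitDisk ∧ Set.InjOn g unitDisk ∧ g 0 = 0 ∧ deriv g 0 = 1 ∧
    ∀ z ∈ unitDisk, z ≠ 0 → 0 < (z * deriv g z / g z).re

lemma unitDisk_eq : unitDisk = Metric.ball (0:ℂ) 1 := by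
  ext z; simp [unitDisk, Metric.mem_ball, Complex.dist_eq]

-- L1 : factorization
lemma factor_lemma (p : ℕ) (hp : 0 < p) (f : ℂ → ℂ)
    (hf : DifferentiableOn ℂ f (Metric.ball (0:ℂ) 1))
    (hcoef : ∀ k < p, iteratedDeriv k f 0 = 0)
    (hcoefp : iteratedDeriv p f 0 = (p.factorial : ℂ)) :
    ∃ g : ℂ → ℂ, AnalyticOnNhd ℂ g (Metric.ball (0:ℂ) 1) ∧ g 0 = 1 ∧
      ∀ z ∈ Metric.ball (0:ℂ) 1, f z = z ^ p * g z := by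
  have hball : IsOpen (Metric.ball (0:ℂ) 1) := Metric.isOpen_ball
  have hfa : AnalyticOnNhd ℂ f (Metric.ball (0:ℂ) 1) := hf.analyticOnNhd hball
  have h0 : (0:ℂ) ∈ Metric.ball (0:ℂ) 1 := by simp
  obtain ⟨P, hP⟩ := hfa 0 h0
  -- coefficients
  have hcoeff : ∀ n : ℕ, (n.factorial : ℂ) * P.coeff n = iteratedDeriv n f 0 := by
    intro n
    obtain ⟨r, hr⟩ := hP
    have := hr.factorial_smul (1:ℂ) n
    rw [iteratedDeriv_eq_iteratedFDeriv, ← this, nsmul_eq_mul]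
    rfl
  have hcoeff0 : ∀ k < p, P.coeff k = 0 := by
    intro k hk
    have := hcoeff k
    rw [hcoef k hk] at this
    exact (mul_eq_zero.1 this).resolve_left (by exact_mod_cast k.factorial_ne_zero)
  have hcoeffp : P.coeff p = 1 := by
    have := hcoeff p
    rw [hcoefp] at this
    have h1 : (p.factorial : ℂ) ≠ 0 := by exact_mod_cast p.factorial_ne_zero
    field_simp at this
    exact this
  -- the iterated dslope function
  set g : ℂ → ℂ := (swap dslope 0)^[p] f with hg_def
  -- value at 0 of each iterate
  have hval : ∀ k : ℕ, (swap dslope 0)^[k] f 0 = P.coeff k := by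
    intro k
    have hk := hP.has_fpower_series_iterate_dslope_fslope k
    have h2 : (FormalMultilinearSeries.fslope^[k] P).coeff 0 = (swap dslope 0)^[k] f 0 :=
      hk.coeff_zero (fun _ => (1:ℂ))
    rw [← h2, FormalMultilinearSeries.coeff_iterate_fslope]
    simp
  have hg0 : g 0 = 1 := by
    rw [hg_def, hval p, hcoeffp]
  -- values away from 0
  have hvals : ∀ k, k ≤ p → ∀ z : ℂ, z ≠ 0 → (swap dslope 0)^[k] f z = f z / z ^ k := by
    intro k
    induction k with
    | zero => intro _ z hz; simp
    | succ n ih =>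
      intro hk z hz
      have hn : n < p := hk
      rw [Function.iterate_succ_apply']
      have h1 : (swap dslope 0)^[n] f 0 = 0 := by
        rw [hval n, hcoeff0 n hn]
      rw [show swap dslope 0 ((swap dslope 0)^[n] f) = dslope ((swap dslope 0)^[n] f) 0 from rfl]
      rw [dslope_of_ne _ hz, slope_def_field, h1, sub_zero, sub_zero,
        ih (le_of_lt hn) z hz]
      rw [div_div, pow_succ]
  have hf0 : f 0 = 0 := by
    have := hcoef 0 hp
    simpa using this
  refine ⟨g, ?_, hg0, ?_⟩
  · intro z hz
    rcases eq_or_ne z 0 with rfl | hz0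
    · exact (hP.has_fpower_series_iterate_dslope_fslope p).analyticAt
    · have hev : (fun w => f w / w ^ p) =ᶠ[nhds z] g := by
        filter_upwards [isOpen_ne.mem_nhds hz0] with w hw
        exact (hvals p le_rfl w hw).symm
      exact (((hfa z hz).div (analyticAt_id.pow p) (pow_ne_zero p hz0))).congr hev
  · intro z hz
    rcases eq_or_ne z 0 with rfl | hz0
    · simp [hf0, zero_pow hp.ne']
    · have := hvals p le_rfl z hz0
      rw [hg_def, this]
      field_simp


-- S2
lemma key_ident1 (p : ℕ) (hp : 0 < p) (f g : ℂ → ℂ)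
    (hga : AnalyticOnNhd ℂ g (ball (0:ℂ) 1))
    (hfac : ∀ z ∈ ball (0:ℂ) 1, f z = z ^ p * g z)
    {z : ℂ} (hz : z ∈ ball (0:ℂ) 1) (hgz : g z ≠ 0) :
    z * deriv f z = (p:ℂ) * (1 + z * deriv g z / ((p:ℂ) * g z)) * f z := by
  obtain ⟨m, rfl⟩ : ∃ m, p = m + 1 := ⟨p - 1, (Nat.succ_pred_eq_of_pos hp).symm⟩
  have hev : f =ᶠ[nhds z] fun w => w ^ (m+1) * g w := by
    filter_upwards [isOpen_ball.mem_nhds hz] with w hw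
    exact hfac w hw
  have hD : HasDerivAt (fun w => w ^ (m+1) * g w)
      ((((m:ℕ)+1) : ℂ) * z ^ m * g z + z ^ (m+1) * deriv g z) z := by
    have h1 := hasDerivAt_pow (m+1) z
    have h2 := h1.fun_mul (hga z hz).differentiableAt.hasDerivAt
    simpa only [Nat.cast_add, Nat.cast_one, add_tsub_cancel_right] using h2
  have hder : deriv f z = (((m:ℕ)+1) : ℂ) * z ^ m * g z + z ^ (m+1) * deriv g z := by
    rw [hev.deriv_eq, hD.deriv]
  rw [hder, hfac z hz]
  have hpne : ((m:ℂ) + 1) ≠ 0 := Nat.cast_add_one_ne_zero m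
  field_simp
  push_cast
  ring

-- S5
lemma key_ident2 (p : ℕ) (hp : 0 < p) (f g : ℂ → ℂ)
    (hfa : AnalyticOnNhd ℂ f (ball (0:ℂ) 1))
    (hga : AnalyticOnNhd ℂ g (ball (0:ℂ) 1))
    (hfac : ∀ z ∈ ball (0:ℂ) 1, f z = z ^ p * g z)
    {z0 : ℂ} (hz : z0 ∈ ball (0:ℂ) 1) (hz0 : z0 ≠ 0) (hgz : g z0 ≠ 0)
    (hfz : deriv f z0 ≠ 0)
    (hq0 : (1 + z0 * deriv g z0 / ((p:ℂ) * g z0)) ≠ 0) :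
    1 + z0 * deriv (deriv f) z0 / deriv f z0 =
      z0 * deriv (fun z => 1 + z * deriv g z / ((p:ℂ) * g z)) z0 /
        (1 + z0 * deriv g z0 / ((p:ℂ) * g z0)) +
      (p:ℂ) * (1 + z0 * deriv g z0 / ((p:ℂ) * g z0)) := by
  have hpne : ((p:ℂ)) ≠ 0 := Nat.cast_ne_zero.2 hp.ne'
  set q : ℂ → ℂ := fun z => 1 + z * deriv g z / ((p:ℂ) * g z) with hq_def
  have hU : IsOpen (ball (0:ℂ) 1 ∩ g ⁻¹' {0}ᶜ) :=
    hga.continuousOn.isOpen_inter_preimage isOpen_ball isOpen_compl_singleton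
  have hzU : z0 ∈ ball (0:ℂ) 1 ∩ g ⁻¹' {0}ᶜ := ⟨hz, hgz⟩
  -- eventual identity
  have hev : (fun z => z * deriv f z) =ᶠ[nhds z0] fun z => (p:ℂ) * (q z * f z) := by
    filter_upwards [hU.mem_nhds hzU] with w hw
    rw [key_ident1 p hp f g hga hfac hw.1 hw.2]; ring
  -- differentiability of q
  have hg' : AnalyticOnNhd ℂ (deriv g) (ball (0:ℂ) 1) := hga.deriv
  have hqd : DifferentiableAt ℂ q z0 := by
    apply (DifferentiableAt.div (differentiableAt_id.mul (hg' z0 hz).differentiableAt)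
      ((differentiableAt_const _).mul (hga z0 hz).differentiableAt)
      (mul_ne_zero hpne hgz)).const_add
  have hf' : HasDerivAt (deriv f) (deriv (deriv f) z0) z0 :=
    (hfa.deriv z0 hz).differentiableAt.hasDerivAt
  have hA : HasDerivAt (fun z => z * deriv f z)
      (deriv f z0 + z0 * deriv (deriv f) z0) z0 := by
    simpa only [one_mul] using (hasDerivAt_id' (x := z0)).fun_mul hf'
  have hB : HasDerivAt (fun z => (p:ℂ) * (q z * f z))
      ((p:ℂ) * (deriv q z0 * f z0 + q z0 * deriv f z0)) z0 :=
    (hqd.hasDerivAt.mul (hfa z0 hz).differentiableAt.hasDerivAt).const_mul _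
  have hA' : HasDerivAt (fun z => z * deriv f z)
      ((p:ℂ) * (deriv q z0 * f z0 + q z0 * deriv f z0)) z0 :=
    hB.congr_of_eventuallyEq hev
  have hE : deriv f z0 + z0 * deriv (deriv f) z0
      = (p:ℂ) * (deriv q z0 * f z0 + q z0 * deriv f z0) := hA.unique hA'
  have hE2 : z0 * deriv f z0 = (p:ℂ) * q z0 * f z0 :=
    key_ident1 p hp f g hga hfac hz hgz
  -- now pure algebra
  have hQ : q z0 ≠ 0 := hq0
  have hfzval : f z0 = z0 * deriv f z0 / ((p:ℂ) * q z0) := by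
    rw [eq_div_iff (mul_ne_zero hpne hQ)]
    linear_combination - hE2
  rw [hfzval] at hE
  show 1 + z0 * deriv (deriv f) z0 / deriv f z0 =
      z0 * deriv q z0 / q z0 + (p:ℂ) * q z0
  have h4 : z0 * deriv (deriv f) z0 =
      (p:ℂ) * (deriv q z0 * (z0 * deriv f z0 / ((p:ℂ) * q z0)) + q z0 * deriv f z0)
        - deriv f z0 := by linear_combination hE
  rw [h4]
  field_simp
  ring

-- L3 core positivity
lemma core_pos (p : ℕ) (hp : 0 < p) (f g : ℂ → ℂ)
    (hfa : AnalyticOnNhd ℂ f (ball (0:ℂ) 1))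
    (hga : AnalyticOnNhd ℂ g (ball (0:ℂ) 1))
    (hfac : ∀ z ∈ ball (0:ℂ) 1, f z = z ^ p * g z)
    (hne : ∀ z ∈ ball (0:ℂ) 1, z ≠ 0 → deriv f z ≠ 0)
    (hre : ∀ z ∈ ball (0:ℂ) 1, 0 < (1 + z * deriv (deriv f) z / deriv f z).re)
    (r : ℝ) (hr : r < 1)
    (hgne : ∀ y ∈ closedBall (0:ℂ) r, g y ≠ 0) :
    ∀ z ∈ closedBall (0:ℂ) r, 0 < (1 + z * deriv g z / ((p:ℂ) * g z)).re := by
  have hpne : ((p:ℂ)) ≠ 0 := Nat.cast_ne_zero.2 hp.ne'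
  set q : ℂ → ℂ := fun z => 1 + z * deriv g z / ((p:ℂ) * g z) with hq_def
  have hsub : closedBall (0:ℂ) r ⊆ ball (0:ℂ) 1 := fun y hy => by
    simp only [mem_closedBall, mem_ball] at *; linarith [hy]
  -- q is differentiable (hence continuous) at points of closedBall r
  have hqd : ∀ y ∈ closedBall (0:ℂ) r, DifferentiableAt ℂ q y := by
    intro y hy
    exact (DifferentiableAt.div
      (differentiableAt_id.mul (hga.deriv y (hsub hy)).differentiableAt)
      ((differentiableAt_const _).mul (hga y (hsub hy)).differentiableAt)
      (mul_ne_zero hpne (hgne y hy))).const_add 1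
  have hqc : ContinuousOn q (closedBall (0:ℂ) r) :=
    fun y hy => (hqd y hy).continuousAt.continuousWithinAt
  have hq0 : q 0 = 1 := by simp [hq_def]
  by_contra hcon
  push_neg at hcon
  obtain ⟨z1, hz1, hz1le⟩ := hcon
  -- the compact set K
  set K : Set ℂ := closedBall (0:ℂ) r ∩ {z | (q z).re ≤ 0} with hK_def
  have hKne : K.Nonempty := ⟨z1, hz1, hz1le⟩
  have hKclosed : IsClosed K := by
    have : K = closedBall (0:ℂ) r ∩ (fun z => (q z).re) ⁻¹' (Iic 0) := rfl
    rw [this]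
    exact ContinuousOn.preimage_isClosed_of_isClosed
      (Complex.continuous_re.comp_continuousOn hqc) Metric.isClosed_closedBall isClosed_Iic
  have hKcpt : IsCompact K :=
    (isCompact_closedBall _ _).of_isClosed_subset hKclosed inter_subset_left
  obtain ⟨z0, hz0K, hz0min⟩ := hKcpt.exists_isMinOn hKne
    (continuous_norm.continuousOn : ContinuousOn (fun z : ℂ => ‖z‖) K)
  have hz0cb : z0 ∈ closedBall (0:ℂ) r := hz0K.1
  have hz0le : (q z0).re ≤ 0 := hz0K.2
  have h0K : (0:ℂ) ∉ K := by
    intro h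
    have h2 := h.2
    simp only [mem_setOf_eq, hq0] at h2
    norm_num at h2
  have hz0ne : z0 ≠ 0 := fun h => h0K (h ▸ hz0K)
  have hz0pos : 0 < ‖z0‖ := norm_pos_iff.2 hz0ne
  -- helper : no point of норм ≤ ‖z0‖ in closedBall has (q y).re < 0
  have helper : ∀ y ∈ closedBall (0:ℂ) r, ‖y‖ ≤ ‖z0‖ → ¬ ((q y).re < 0) := by
    intro y hy hyle hylt
    have hyne : y ≠ 0 := by
      intro h; rw [h, hq0] at hylt; norm_num at hylt
    -- IVT along t ↦ q (t y)
    set φ : ℝ → ℝ := fun t => (q ((t:ℂ) * y)).re with hφ_def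
    have hmem : ∀ t ∈ Icc (0:ℝ) 1, ((t:ℂ) * y) ∈ closedBall (0:ℂ) r := by
      intro t ht
      rw [mem_closedBall, dist_zero_right] at *
      calc ‖(t:ℂ) * y‖ = |t| * ‖y‖ := by
            rw [norm_mul, Complex.norm_real, Real.norm_eq_abs]
        _ ≤ 1 * ‖y‖ := by
            apply mul_le_mul_of_nonneg_right _ (norm_nonneg y)
            rw [abs_le]; exact ⟨by linarith [ht.1], ht.2⟩
        _ = ‖y‖ := one_mul _
        _ ≤ r := hy
    have hφc : ContinuousOn φ (Icc (0:ℝ) 1) := by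
      apply Complex.continuous_re.comp_continuousOn
      apply hqc.comp _ hmem
      exact (Complex.continuous_ofReal.continuousOn.mul continuousOn_const)
    have hφ0 : φ 0 = 1 := by simp [hφ_def, hq0]
    have hφ1 : φ 1 < 0 := by simpa [hφ_def] using hylt
    have h0mem : (0:ℝ) ∈ Icc (φ 1) (φ 0) := by
      constructor <;> [linarith; simp [hφ0]]
    obtain ⟨t0, ht0, hφt0⟩ := intermediate_value_Icc' (by norm_num : (0:ℝ) ≤ 1) hφc h0mem
    have ht0ne1 : t0 ≠ 1 := by
      intro h; rw [h] at hφt0; rw [hφt0] at hφ1; exact lt_irrefl _ hφ1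
    have ht0lt1 : t0 < 1 := lt_of_le_of_ne ht0.2 ht0ne1
    have hmemK : ((t0:ℂ) * y) ∈ K := ⟨hmem t0 ht0, le_of_eq hφt0⟩
    have := hz0min hmemK
    simp only [mem_setOf_eq] at this
    have hnorm : ‖(t0:ℂ) * y‖ < ‖z0‖ := by
      rw [norm_mul, Complex.norm_real, Real.norm_eq_abs, _root_.abs_of_nonneg ht0.1]
      calc t0 * ‖y‖ ≤ t0 * ‖z0‖ := by
            apply mul_le_mul_of_nonneg_left hyle ht0.1
        _ < 1 * ‖z0‖ := by apply mul_lt_mul_of_pos_right ht0lt1 hz0pos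
        _ = ‖z0‖ := one_mul _
    exact absurd this (not_le.2 hnorm)
  -- q z0 is purely imaginary
  have hz0re : (q z0).re = 0 :=
    le_antisymm hz0le (not_lt.1 (helper z0 hz0cb le_rfl))
  -- min on circle
  have hcirc : ∀ θ : ℝ, 0 ≤ (q (z0 * Complex.exp (θ * Complex.I))).re := by
    intro θ
    have hmem : z0 * Complex.exp (θ * Complex.I) ∈ closedBall (0:ℂ) r := by
      rw [mem_closedBall, dist_zero_right, norm_mul, Complex.norm_exp]
      simp only [Complex.mul_I_re, Complex.ofReal_im, neg_zero, Real.exp_zero, mul_one]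
      rwa [mem_closedBall, dist_zero_right] at hz0cb
    have hnorm : ‖z0 * Complex.exp (θ * Complex.I)‖ ≤ ‖z0‖ := by
      rw [norm_mul, Complex.norm_exp]
      simp [Complex.mul_I_re]
    exact not_lt.1 (helper _ hmem hnorm)
  -- derivative of q along the circle vanishes at z0
  have hqz0d : DifferentiableAt ℂ q z0 := hqd z0 hz0cb
  have h0z : z0 * Complex.exp ((0:ℂ) * Complex.I) = z0 := by simp
  have hinnerC : HasDerivAt (fun w : ℂ => z0 * Complex.exp (w * Complex.I))
      (z0 * Complex.I) 0 := by
    have h1 : HasDerivAt (fun w : ℂ => w * Complex.I) ((1:ℂ) * Complex.I) 0 :=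
      (hasDerivAt_id (0:ℂ)).mul_const Complex.I
    have h2 := (h1.cexp).const_mul z0
    simpa using h2
  have hcompC : HasDerivAt (q ∘ fun w : ℂ => z0 * Complex.exp (w * Complex.I))
      (deriv q z0 * (z0 * Complex.I)) 0 := by
    have hq' : HasDerivAt q (deriv q z0) (z0 * Complex.exp ((0:ℂ) * Complex.I)) := by
      rw [h0z]; exact hqz0d.hasDerivAt
    exact HasDerivAt.comp 0 hq' hinnerC
  have hcompR : HasDerivAt (fun θ : ℝ => q (z0 * Complex.exp ((θ:ℂ) * Complex.I)))
      (deriv q z0 * (z0 * Complex.I)) 0 := by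
    exact hcompC.comp_ofReal
  have hcompRe : HasDerivAt (fun θ : ℝ => (q (z0 * Complex.exp ((θ:ℂ) * Complex.I))).re)
      ((deriv q z0 * (z0 * Complex.I)).re) 0 :=
    Complex.reCLM.hasFDerivAt.comp_hasDerivAt 0 hcompR
  have hmin : IsLocalMin (fun θ : ℝ => (q (z0 * Complex.exp ((θ:ℂ) * Complex.I))).re) 0 := by
    apply Filter.Eventually.of_forall
    intro θ
    have h1 : (q (z0 * Complex.exp (((0:ℝ):ℂ) * Complex.I))).re = 0 := by
      push_cast
      rw [h0z, hz0re]
    exact le_trans (le_of_eq h1) (hcirc θ)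
  have him0 : (deriv q z0 * (z0 * Complex.I)).re = 0 := hmin.hasDerivAt_eq_zero hcompRe
  have him : (z0 * deriv q z0).im = 0 := by
    rw [show deriv q z0 * (z0 * Complex.I) = (z0 * deriv q z0) * Complex.I by ring,
      Complex.mul_I_re] at him0
    linarith [him0]
  -- q z0 is a nonzero purely imaginary number
  set ρ : ℝ := (q z0).im with hρ_def
  have hballz0 : z0 ∈ ball (0:ℂ) 1 := hsub hz0cb
  have hfz : deriv f z0 ≠ 0 := hne z0 hballz0 hz0ne
  have hρne : ρ ≠ 0 := by
    intro hρ0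
    have hq00 : q z0 = 0 := by
      apply Complex.ext
      · simpa using hz0re
      · simpa using hρ0
    have hid := key_ident1 p hp f g hga hfac hballz0 (hgne z0 hz0cb)
    rw [show (1 + z0 * deriv g z0 / ((p:ℂ) * g z0)) = q z0 from rfl, hq00] at hid
    simp only [mul_zero, zero_mul] at hid
    exact hz0ne (by simpa [hfz] using mul_eq_zero.1 hid)
  have hqz0val : q z0 = (ρ:ℂ) * Complex.I := by
    apply Complex.ext <;> simp [hz0re, hρ_def]
  have hqz0ne : q z0 ≠ 0 := by
    rw [hqz0val]
    exact mul_ne_zero (by exact_mod_cast hρne) Complex.I_ne_zero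
  -- the key identity gives a purely imaginary value with positive real part
  have hid2 := key_ident2 p hp f g hfa hga hfac hballz0 hz0ne (hgne z0 hz0cb) hfz hqz0ne
  have hgt := hre z0 hballz0
  rw [hid2] at hgt
  rw [show deriv (fun z => 1 + z * deriv g z / ((p:ℂ) * g z)) z0 = deriv q z0 from rfl] at hgt
  have hσval : z0 * deriv q z0 = (((z0 * deriv q z0).re : ℝ) : ℂ) := by
    apply Complex.ext <;> simp [him]
  rw [show (1 + z0 * deriv g z0 / ((p:ℂ) * g z0)) = q z0 from rfl] at hgt
  rw [show z0 * deriv q z0 / q z0 = (((z0 * deriv q z0).re : ℝ) : ℂ) / ((ρ:ℂ) * Complex.I) by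
    rw [← hσval, hqz0val], hqz0val] at hgt
  set s : ℝ := (z0 * deriv q z0).re
  rw [Complex.add_re] at hgt
  have e1 : ((s:ℂ) / ((ρ:ℂ) * Complex.I)).re = 0 := by
    rw [Complex.div_re]
    simp
  have e2 : ((p:ℂ) * ((ρ:ℂ) * Complex.I)).re = 0 := by
    simp
  rw [e1, e2] at hgt
  norm_num at hgt

-- L4 g never vanishes
lemma g_ne_zero (p : ℕ) (hp : 0 < p) (f g : ℂ → ℂ)
    (hfa : AnalyticOnNhd ℂ f (ball (0:ℂ) 1))
    (hga : AnalyticOnNhd ℂ g (ball (0:ℂ) 1))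
    (hg0 : g 0 = 1)
    (hfac : ∀ z ∈ ball (0:ℂ) 1, f z = z ^ p * g z)
    (hne : ∀ z ∈ ball (0:ℂ) 1, z ≠ 0 → deriv f z ≠ 0)
    (hre : ∀ z ∈ ball (0:ℂ) 1, 0 < (1 + z * deriv (deriv f) z / deriv f z).re) :
    ∀ z ∈ ball (0:ℂ) 1, g z ≠ 0 := by
  have hpne : ((p:ℂ)) ≠ 0 := Nat.cast_ne_zero.2 hp.ne'
  by_contra hcon
  push_neg at hcon
  obtain ⟨z1, hz1, hgz1⟩ := hcon
  rw [mem_ball, dist_zero_right] at hz1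
  -- minimal norm zero of g
  set Z : Set ℂ := closedBall (0:ℂ) ‖z1‖ ∩ {z | g z = 0} with hZ_def
  have hsub1 : closedBall (0:ℂ) ‖z1‖ ⊆ ball (0:ℂ) 1 := by
    intro y hy
    rw [mem_closedBall, dist_zero_right] at hy
    rw [mem_ball, dist_zero_right]
    linarith
  have hZne : Z.Nonempty := ⟨z1, by simp [mem_closedBall, dist_zero_right], hgz1⟩
  have hZclosed : IsClosed Z :=
    ContinuousOn.preimage_isClosed_of_isClosed
      (hga.continuousOn.mono hsub1) Metric.isClosed_closedBall isClosed_singleton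
  have hZcpt : IsCompact Z :=
    (isCompact_closedBall _ _).of_isClosed_subset hZclosed inter_subset_left
  obtain ⟨z2, hz2Z, hz2min⟩ := hZcpt.exists_isMinOn hZne
    (continuous_norm.continuousOn : ContinuousOn (fun z : ℂ => ‖z‖) Z)
  have hgz2 : g z2 = 0 := hz2Z.2
  have hz2ne : z2 ≠ 0 := by
    intro h; rw [h, hg0] at hgz2; norm_num at hgz2
  have hz2ball : z2 ∈ ball (0:ℂ) 1 := hsub1 hz2Z.1
  have hz2lt1 : ‖z2‖ < 1 := by rwa [mem_ball, dist_zero_right] at hz2ball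
  have hz2pos : 0 < ‖z2‖ := norm_pos_iff.2 hz2ne
  -- g does not vanish strictly inside radius ‖z2‖
  have hg_ne_lt : ∀ y : ℂ, ‖y‖ < ‖z2‖ → g y ≠ 0 := by
    intro y hy hgy
    have hyZ : y ∈ Z := by
      refine ⟨?_, hgy⟩
      rw [mem_closedBall, dist_zero_right]
      have := hz2Z.1
      rw [mem_closedBall, dist_zero_right] at this
      linarith
    have := hz2min hyZ
    simp only [mem_setOf_eq] at this
    exact absurd this (not_le.2 hy)
  -- positivity of Re q inside radius ‖z2‖
  have hqpos : ∀ y : ℂ, ‖y‖ < ‖z2‖ → 0 < (1 + y * deriv g y / ((p:ℂ) * g y)).re := by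
    intro y hy
    refine core_pos p hp f g hfa hga hfac hne hre ‖y‖ (lt_trans hy hz2lt1) ?_ y ?_
    · intro w hw
      rw [mem_closedBall, dist_zero_right] at hw
      exact hg_ne_lt w (lt_of_le_of_lt hw hy)
    · simp [mem_closedBall]
  -- limit argument along the radius to z2
  have hfz2 : f z2 = 0 := by rw [hfac z2 hz2ball, hgz2, mul_zero]
  have hfz2' : deriv f z2 ≠ 0 := hne z2 hz2ball hz2ne
  have hD : HasDerivAt f (deriv f z2) z2 := (hfa z2 hz2ball).differentiableAt.hasDerivAt
  have hmap : Filter.Tendsto (fun t : ℝ => (t:ℂ) * z2) (nhdsWithin 1 (Iio 1))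
      (nhdsWithin z2 {z2}ᶜ) := by
    apply tendsto_nhdsWithin_of_tendsto_nhds_of_eventually_within
    · have : Filter.Tendsto (fun t : ℝ => (t:ℂ) * z2) (nhds 1) (nhds ((1:ℂ) * z2)) :=
        (Complex.continuous_ofReal.tendsto 1).mul tendsto_const_nhds
      simpa using this.mono_left nhdsWithin_le_nhds
    · filter_upwards [self_mem_nhdsWithin] with t ht
      simp only [mem_Iio] at ht
      simp only [mem_compl_iff, mem_singleton_iff]
      intro h
      have : ((t:ℂ) - 1) * z2 = 0 := by rw [sub_mul, one_mul, h, sub_self]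
      rcases mul_eq_zero.1 this with h1 | h2
      · have : (t:ℂ) = 1 := by linear_combination h1
        have : t = 1 := by exact_mod_cast this
        linarith
      · exact hz2ne h2
  have hslope : Filter.Tendsto (fun t : ℝ => slope f z2 ((t:ℂ) * z2))
      (nhdsWithin 1 (Iio 1)) (nhds (deriv f z2)) :=
    (hasDerivAt_iff_tendsto_slope.1 hD).comp hmap
  have hderivf : Filter.Tendsto (fun t : ℝ => deriv f ((t:ℂ) * z2))
      (nhdsWithin 1 (Iio 1)) (nhds (deriv f z2)) := by
    have hc : ContinuousAt (deriv f) z2 := (hfa.deriv z2 hz2ball).continuousAt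
    exact hc.tendsto.comp (hmap.mono_right nhdsWithin_le_nhds)
  have htC : Filter.Tendsto (fun t : ℝ => (t:ℂ)) (nhdsWithin 1 (Iio 1)) (nhds 1) :=
    (Complex.continuous_ofReal.tendsto 1).mono_left nhdsWithin_le_nhds
  have hA : Filter.Tendsto
      (fun t : ℝ => (t:ℂ) * deriv f ((t:ℂ) * z2) / ((p:ℂ) * slope f z2 ((t:ℂ) * z2)))
      (nhdsWithin 1 (Iio 1)) (nhds ((1:ℂ) * deriv f z2 / ((p:ℂ) * deriv f z2))) :=
    (htC.mul hderivf).div (Filter.Tendsto.const_mul _ hslope)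
      (mul_ne_zero hpne hfz2')
  have hppos : (0:ℝ) < ((p:ℝ))⁻¹ := by
    rw [inv_pos]
    exact_mod_cast hp
  have hlim : ((1:ℂ) * deriv f z2 / ((p:ℂ) * deriv f z2)).re = ((p:ℝ))⁻¹ := by
    rw [one_mul]
    have h1 : deriv f z2 / ((p:ℂ) * deriv f z2) = ((p:ℂ))⁻¹ := by
      field_simp
    rw [h1, show ((p:ℂ))⁻¹ = ((((p:ℝ))⁻¹ : ℝ) : ℂ) by push_cast; ring, Complex.ofReal_re]
  have hARe : Filter.Tendsto
      (fun t : ℝ => ((t:ℂ) * deriv f ((t:ℂ) * z2) / ((p:ℂ) * slope f z2 ((t:ℂ) * z2))).re)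
      (nhdsWithin 1 (Iio 1)) (nhds (((p:ℝ))⁻¹)) := by
    rw [← hlim]
    exact (Complex.continuous_re.tendsto _).comp hA
  have hev1 : ∀ᶠ (t : ℝ) in nhdsWithin (1:ℝ) (Iio 1),
      0 < ((t:ℂ) * deriv f ((t:ℂ) * z2) / ((p:ℂ) * slope f z2 ((t:ℂ) * z2))).re :=
    hARe.eventually (eventually_gt_nhds hppos)
  have hev2 : ∀ᶠ (t : ℝ) in nhdsWithin (1:ℝ) (Iio 1), t ∈ Ioo (0:ℝ) 1 :=
    Ioo_mem_nhdsLT_of_mem ⟨zero_lt_one, le_rfl⟩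
  obtain ⟨t, hA1, ht0, ht1⟩ := (hev1.and hev2).exists
  -- derive the contradiction at the point t*z2
  have ht1C : ((t:ℂ) - 1) ≠ 0 := by
    intro h
    have : (t:ℂ) = 1 := by linear_combination h
    have : t = 1 := by exact_mod_cast this
    linarith [ht1]
  have hwne : (t:ℂ) * z2 ≠ 0 :=
    mul_ne_zero (by exact_mod_cast ht0.ne') hz2ne
  have hwnorm : ‖(t:ℂ) * z2‖ < ‖z2‖ := by
    rw [norm_mul, Complex.norm_real, Real.norm_eq_abs, _root_.abs_of_nonneg ht0.le]
    nlinarith [hz2pos, ht1]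
  have hwball : (t:ℂ) * z2 ∈ ball (0:ℂ) 1 := by
    rw [mem_ball, dist_zero_right]
    linarith [hwnorm, hz2lt1]
  have hgw : g ((t:ℂ) * z2) ≠ 0 := hg_ne_lt _ hwnorm
  have hfw : f ((t:ℂ) * z2) ≠ 0 := by
    rw [hfac _ hwball]
    exact mul_ne_zero (pow_ne_zero p hwne) hgw
  have hwz2ne : (t:ℂ) * z2 - z2 ≠ 0 := by
    rw [show (t:ℂ) * z2 - z2 = ((t:ℂ) - 1) * z2 by ring]
    exact mul_ne_zero ht1C hz2ne
  have hfw_eq : f ((t:ℂ) * z2) = ((t:ℂ) * z2 - z2) * slope f z2 ((t:ℂ) * z2) := by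
    rw [slope_def_field, hfz2, sub_zero]
    field_simp
  have hslope_ne : slope f z2 ((t:ℂ) * z2) ≠ 0 := by
    intro h
    apply hfw
    rw [hfw_eq, h, mul_zero]
  have hid := key_ident1 p hp f g hga hfac hwball hgw
  have hQval : (1 + ((t:ℂ) * z2) * deriv g ((t:ℂ) * z2) / ((p:ℂ) * g ((t:ℂ) * z2)))
      = ((t:ℂ) * z2) * deriv f ((t:ℂ) * z2) / ((p:ℂ) * f ((t:ℂ) * z2)) := by
    rw [eq_div_iff (mul_ne_zero hpne hfw)]
    linear_combination -hid
  have key : ((t:ℂ) * z2) * deriv f ((t:ℂ) * z2) / ((p:ℂ) * f ((t:ℂ) * z2))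
      = ((t:ℂ) * deriv f ((t:ℂ) * z2) / ((p:ℂ) * slope f z2 ((t:ℂ) * z2)))
        * (((t - 1 : ℝ)) : ℂ)⁻¹ := by
    rw [hfw_eq]
    push_cast
    field_simp
  have hqw := hqpos ((t:ℂ) * z2) hwnorm
  rw [hQval, key] at hqw
  rw [← Complex.ofReal_inv, mul_comm, Complex.re_ofReal_mul] at hqw
  have hneg : (t - 1 : ℝ)⁻¹ < 0 := inv_lt_zero.2 (by linarith [ht1])
  nlinarith [hqw, hA1, hneg]

lemma exists_primitive (h : ℂ → ℂ)
    (hh : AnalyticOnNhd ℂ h (ball (0:ℂ) 1)) :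
    ∃ L : ℂ → ℂ, L 0 = 0 ∧ ∀ z ∈ ball (0:ℂ) 1, HasDerivAt L (h z) z := by
  set L : ℂ → ℂ := fun z => ∫ t in (0:ℝ)..1, z * h ((t:ℂ) * z) with hL_def
  have hL0 : L 0 = 0 := by simp [hL_def]
  refine ⟨L, hL0, ?_⟩
  intro z0 hz0
  rw [mem_ball, dist_zero_right] at hz0
  set ε : ℝ := (1 - ‖z0‖) / 2 with hε_def
  have hεpos : 0 < ε := by
    rw [hε_def]; linarith [hz0]
  set R : ℝ := ‖z0‖ + ε with hR_def
  have hR1 : R < 1 := by rw [hR_def, hε_def]; linarith [hz0]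
  have hR0 : 0 ≤ R := by positivity
  -- membership facts
  have hmem : ∀ x : ℂ, x ∈ ball z0 ε → ∀ t : ℝ, t ∈ Icc (0:ℝ) 1 →
      (t:ℂ) * x ∈ closedBall (0:ℂ) R := by
    intro x hx t ht
    rw [mem_ball] at hx
    rw [mem_closedBall, dist_zero_right, norm_mul, Complex.norm_real, Real.norm_eq_abs,
      _root_.abs_of_nonneg ht.1]
    have hxn : ‖x‖ ≤ R := by
      calc ‖x‖ = ‖z0 + (x - z0)‖ := by ring_nf
        _ ≤ ‖z0‖ + ‖x - z0‖ := norm_add_le _ _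
        _ ≤ ‖z0‖ + ε := by
            have := hx
            rw [dist_eq_norm] at this
            linarith [this.le]
      
    calc t * ‖x‖ ≤ 1 * ‖x‖ := mul_le_mul_of_nonneg_right ht.2 (norm_nonneg x)
      _ = ‖x‖ := one_mul _
      _ ≤ R := hxn
  have hsubR : closedBall (0:ℂ) R ⊆ ball (0:ℂ) 1 := by
    intro y hy
    rw [mem_closedBall, dist_zero_right] at hy
    rw [mem_ball, dist_zero_right]
    linarith
  -- bounds
  obtain ⟨C, hC⟩ := (isCompact_closedBall (0:ℂ) R).exists_bound_of_continuousOn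
    ((hh.continuousOn).mono hsubR)
  obtain ⟨C', hC'⟩ := (isCompact_closedBall (0:ℂ) R).exists_bound_of_continuousOn
    ((hh.deriv.continuousOn).mono hsubR)
  have hC0 : 0 ≤ C := le_trans (norm_nonneg _) (hC 0 (by simp [hR0]))
  have hC'0 : 0 ≤ C' := le_trans (norm_nonneg _) (hC' 0 (by simp [hR0]))
  -- derivative candidate
  set F' : ℂ → ℝ → ℂ := fun x t => h ((t:ℂ) * x) + (t:ℂ) * x * deriv h ((t:ℂ) * x) with hF'_def
  have hz0mem : z0 ∈ ball z0 ε := mem_ball_self hεpos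
  have hcont : ∀ x : ℂ, x ∈ ball z0 ε →
      ContinuousOn (fun t : ℝ => x * h ((t:ℂ) * x)) (Icc (0:ℝ) 1) := by
    intro x hx
    apply ContinuousOn.mul continuousOn_const
    apply (hh.continuousOn.mono hsubR).comp
    · exact (Complex.continuous_ofReal.continuousOn.mul continuousOn_const)
    · intro t ht
      exact hmem x hx t ht
  have hcont' : ContinuousOn (F' z0) (Icc (0:ℝ) 1) := by
    apply ContinuousOn.add
    · apply (hh.continuousOn.mono hsubR).comp
        (Complex.continuous_ofReal.continuousOn.mul continuousOn_const)
      intro t ht; exact hmem z0 hz0mem t ht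
    · apply ContinuousOn.mul (Complex.continuous_ofReal.continuousOn.mul continuousOn_const)
      apply (hh.deriv.continuousOn.mono hsubR).comp
        (Complex.continuous_ofReal.continuousOn.mul continuousOn_const)
      intro t ht; exact hmem z0 hz0mem t ht
  have hIsub : uIoc (0:ℝ) 1 ⊆ Icc (0:ℝ) 1 := by
    rw [uIoc_of_le (by norm_num : (0:ℝ) ≤ 1)]
    exact Ioc_subset_Icc_self
  have key := intervalIntegral.hasDerivAt_integral_of_dominated_loc_of_deriv_le
    (μ := MeasureTheory.volume) (a := (0:ℝ)) (b := 1) (F := fun x t => x * h ((t:ℂ) * x))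
    (F' := F') (x₀ := z0) (bound := fun _ => C + C') (s := ball z0 ε) (ball_mem_nhds z0 hεpos)
    ?meas ?int ?meas' ?bound ?bint ?diff
  case meas =>
    filter_upwards [isOpen_ball.mem_nhds hz0mem] with x hx
    exact ((hcont x hx).mono hIsub).aestronglyMeasurable measurableSet_uIoc
  case int =>
    exact (hcont z0 hz0mem).intervalIntegrable_of_Icc (by norm_num)
  case meas' =>
    exact ((hcont'.mono hIsub)).aestronglyMeasurable measurableSet_uIoc
  case bound =>
    apply MeasureTheory.ae_of_all
    intro t ht x hx
    have htmem : t ∈ Icc (0:ℝ) 1 := hIsub ht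
    have h1 : (t:ℂ) * x ∈ closedBall (0:ℂ) R := hmem x hx t htmem
    have h2 : ‖h ((t:ℂ) * x)‖ ≤ C := hC _ h1
    have h3 : ‖deriv h ((t:ℂ) * x)‖ ≤ C' := hC' _ h1
    calc ‖F' x t‖ ≤ ‖h ((t:ℂ) * x)‖ + ‖(t:ℂ) * x * deriv h ((t:ℂ) * x)‖ := norm_add_le _ _
      _ ≤ C + C' := by
          apply add_le_add h2
          rw [norm_mul]
          calc ‖(t:ℂ) * x‖ * ‖deriv h ((t:ℂ) * x)‖ ≤ 1 * C' := by
                apply mul_le_mul _ h3 (norm_nonneg _) zero_le_one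
                rw [mem_closedBall, dist_zero_right] at h1
                exact le_trans h1 (le_of_lt hR1)
            _ = C' := one_mul _
  case bint =>
    exact intervalIntegrable_const
  case diff =>
    apply MeasureTheory.ae_of_all
    intro t ht x hx
    have htmem : t ∈ Icc (0:ℝ) 1 := hIsub ht
    have h1 : (t:ℂ) * x ∈ ball (0:ℂ) 1 := hsubR (hmem x hx t htmem)
    have hinner : HasDerivAt (fun y : ℂ => (t:ℂ) * y) ((t:ℂ)) x := by
      simpa using (hasDerivAt_id x).const_mul (t:ℂ)
    have hhd : HasDerivAt h (deriv h ((t:ℂ) * x)) ((t:ℂ) * x) :=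
      (hh _ h1).differentiableAt.hasDerivAt
    have hcomp : HasDerivAt (fun y : ℂ => h ((t:ℂ) * y)) (deriv h ((t:ℂ) * x) * (t:ℂ)) x :=
      HasDerivAt.comp x hhd hinner
    have := (hasDerivAt_id x).fun_mul hcomp
    simp only [one_mul, id] at this
    refine this.congr_deriv ?_
    rw [hF'_def]
    ring
  -- now identify the integral of F' z0 with h z0
  obtain ⟨-, hKey⟩ := key
  have hFTC : (∫ t in (0:ℝ)..1, F' z0 t) = h z0 := by
    have hu : ∀ t ∈ uIcc (0:ℝ) 1, HasDerivAt (fun s : ℝ => (s:ℂ) * h ((s:ℂ) * z0)) (F' z0 t) t := by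
      intro t ht
      rw [uIcc_of_le (by norm_num : (0:ℝ) ≤ 1)] at ht
      have h1 : (t:ℂ) * z0 ∈ ball (0:ℂ) 1 := hsubR (hmem z0 hz0mem t ht)
      have hof : HasDerivAt (fun s : ℝ => (s:ℂ)) 1 t := by
        simpa using (hasDerivAt_id t).ofReal_comp
      have hhd : HasDerivAt h (deriv h ((t:ℂ) * z0)) ((t:ℂ) * z0) :=
        (hh _ h1).differentiableAt.hasDerivAt
      have hmulc : HasDerivAt (fun w : ℂ => w * z0) z0 (t:ℂ) := by
        simpa using (hasDerivAt_id ((t:ℂ))).mul_const z0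
      have hinC : HasDerivAt (fun w : ℂ => h (w * z0)) (deriv h ((t:ℂ) * z0) * z0) (t:ℂ) :=
        HasDerivAt.comp _ hhd hmulc
      have hinR : HasDerivAt (fun s : ℝ => h ((s:ℂ) * z0)) (deriv h ((t:ℂ) * z0) * z0) t :=
        hinC.comp_ofReal
      have := hof.fun_mul hinR
      refine this.congr_deriv ?_
      rw [hF'_def]
      push_cast
      ring
    have hci : IntervalIntegrable (F' z0) MeasureTheory.volume 0 1 :=
      hcont'.intervalIntegrable_of_Icc (by norm_num)
    have := intervalIntegral.integral_eq_sub_of_hasDerivAt hu hci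
    rw [this]
    push_cast
    simp
  rw [hFTC] at hKey
  exact hKey

lemma exp_primitive (g L : ℂ → ℂ)
    (hga : AnalyticOnNhd ℂ g (ball (0:ℂ) 1)) (hg0 : g 0 = 1)
    (hgne : ∀ z ∈ ball (0:ℂ) 1, g z ≠ 0)
    (hL0 : L 0 = 0)
    (hL : ∀ z ∈ ball (0:ℂ) 1, HasDerivAt L (deriv g z / g z) z) :
    ∀ z ∈ ball (0:ℂ) 1, Complex.exp (L z) = g z := by
  set φ : ℂ → ℂ := fun z => g z * Complex.exp (-L z) with hφ_def
  have hφd : ∀ z ∈ ball (0:ℂ) 1, HasDerivAt φ 0 z := by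
    intro z hz
    have hgd : HasDerivAt g (deriv g z) z := (hga z hz).differentiableAt.hasDerivAt
    have hexp : HasDerivAt (fun z => Complex.exp (-L z))
        (Complex.exp (-L z) * (-(deriv g z / g z))) z := ((hL z hz).neg).cexp
    have := hgd.fun_mul hexp
    refine this.congr_deriv ?_
    linear_combination (-(Complex.exp (-L z) * deriv g z)) * mul_inv_cancel₀ (hgne z hz)
  have h0mem : (0:ℂ) ∈ ball (0:ℂ) 1 := by simp
  have hconst : ∀ z ∈ ball (0:ℂ) 1, φ z = φ 0 := by
    intro z hz
    apply Convex.is_const_of_fderivWithin_eq_zero (convex_ball (0:ℂ) 1)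
      (fun x hx => (hφd x hx).differentiableAt.differentiableWithinAt) ?_ hz h0mem
    intro x hx
    have h1 := ((hφd x hx).hasFDerivAt.hasFDerivWithinAt).fderivWithin
      (isOpen_ball.uniqueDiffWithinAt hx)
    rw [h1]
    ext w
    simp
  intro z hz
  have h2 := hconst z hz
  rw [hφ_def] at h2
  simp only [hL0, hg0, neg_zero, Complex.exp_zero, mul_one] at h2
  have h3 : g z * Complex.exp (-L z) = 1 := h2
  rw [Complex.exp_neg] at h3
  field_simp at h3
  exact h3.symm

lemma G_inj (p : ℕ) (hp : 0 < p) (h L : ℂ → ℂ)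
    (hh : AnalyticOnNhd ℂ h (ball (0:ℂ) 1))
    (hL : ∀ z ∈ ball (0:ℂ) 1, HasDerivAt L (h z) z)
    (hq : ∀ z ∈ ball (0:ℂ) 1, 0 < (1 + z * h z / (p:ℂ)).re)
    {u v : ℂ} (hu : u.re < 0) (hv : v.re < 0)
    (huv : u + L (Complex.exp u) / p = v + L (Complex.exp v) / p) :
    u = v := by
  by_contra huvne
  set γ : ℝ → ℂ := fun t => v + (t:ℂ) * (u - v) with hγ_def
  have hγre : ∀ t ∈ Icc (0:ℝ) 1, (γ t).re < 0 := by
    intro t ht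
    have : (γ t).re = v.re + t * (u.re - v.re) := by
      simp [hγ_def, Complex.add_re, Complex.re_ofReal_mul, Complex.sub_re]
    rw [this]
    nlinarith [ht.1, ht.2, hu, hv, mul_nonneg (sub_nonneg.2 ht.2) (neg_nonneg.2 hv.le),
      mul_nonneg ht.1 (neg_nonneg.2 hu.le)]
  have hγball : ∀ t ∈ Icc (0:ℝ) 1, Complex.exp (γ t) ∈ ball (0:ℂ) 1 := by
    intro t ht
    rw [mem_ball, dist_zero_right, Complex.norm_exp]
    exact Real.exp_lt_one_iff.2 (hγre t ht)
  -- derivative of φ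
  set ψ : ℝ → ℂ := fun t =>
    (1 + Complex.exp (γ t) * h (Complex.exp (γ t)) / (p:ℂ)) * (u - v) with hψ_def
  set φ : ℝ → ℂ := fun t => γ t + L (Complex.exp (γ t)) / (p:ℂ) with hφ_def
  have hφd : ∀ t ∈ uIcc (0:ℝ) 1, HasDerivAt φ (ψ t) t := by
    intro t ht
    rw [uIcc_of_le (by norm_num : (0:ℝ) ≤ 1)] at ht
    have hinner : HasDerivAt (fun w : ℂ => v + w * (u - v)) (u - v) (t:ℂ) := by
      simpa using ((hasDerivAt_id ((t:ℂ))).mul_const (u - v)).const_add v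
    have hexpd : HasDerivAt (fun w : ℂ => Complex.exp (v + w * (u - v)))
        (Complex.exp (γ t) * (u - v)) (t:ℂ) := hinner.cexp
    have hLd : HasDerivAt L (h (Complex.exp (γ t))) (Complex.exp (γ t)) :=
      hL _ (hγball t ht)
    have hLcomp : HasDerivAt (fun w : ℂ => L (Complex.exp (v + w * (u - v))))
        (h (Complex.exp (γ t)) * (Complex.exp (γ t) * (u - v))) (t:ℂ) :=
      HasDerivAt.comp _ hLd hexpd
    have heC : HasDerivAt (fun w : ℂ => (v + w * (u - v)) + L (Complex.exp (v + w * (u - v))) / (p:ℂ))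
        ((u - v) + h (Complex.exp (γ t)) * (Complex.exp (γ t) * (u - v)) / (p:ℂ)) (t:ℂ) :=
      hinner.add (hLcomp.div_const _)
    have heR := heC.comp_ofReal
    convert heR using 1
    rw [hψ_def]
    ring
  -- continuity of ψ
  have hψc : ContinuousOn ψ (Icc (0:ℝ) 1) := by
    apply ContinuousOn.mul _ continuousOn_const
    apply ContinuousOn.add continuousOn_const
    apply ContinuousOn.div_const
    have hγc : ContinuousOn γ (Icc (0:ℝ) 1) :=
      (continuousOn_const.add ((Complex.continuous_ofReal.continuousOn).mul continuousOn_const))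
    have hexpγ : ContinuousOn (fun t => Complex.exp (γ t)) (Icc (0:ℝ) 1) :=
      Complex.continuous_exp.comp_continuousOn hγc
    exact hexpγ.mul (hh.continuousOn.comp hexpγ (fun t ht => hγball t ht))
  have hψi : IntervalIntegrable ψ MeasureTheory.volume 0 1 :=
    hψc.intervalIntegrable_of_Icc (by norm_num)
  have hFTC := intervalIntegral.integral_eq_sub_of_hasDerivAt hφd hψi
  have hφ1 : φ 1 = u + L (Complex.exp u) / (p:ℂ) := by
    simp [hφ_def, hγ_def]
  have hφ0 : φ 0 = v + L (Complex.exp v) / (p:ℂ) := by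
    simp [hφ_def, hγ_def]
  rw [hφ1, hφ0, huv, sub_self] at hFTC
  -- pull out the constant
  have hsplit : (∫ t in (0:ℝ)..1, ψ t) =
      (∫ t in (0:ℝ)..1, (1 + Complex.exp (γ t) * h (Complex.exp (γ t)) / (p:ℂ))) * (u - v) := by
    rw [← intervalIntegral.integral_mul_const]
  have hzero : (∫ t in (0:ℝ)..1, (1 + Complex.exp (γ t) * h (Complex.exp (γ t)) / (p:ℂ))) = 0 := by
    have := hFTC
    rw [hsplit] at this
    rcases mul_eq_zero.1 this with h1 | h2
    · exact h1
    · exact absurd (sub_eq_zero.1 h2) huvne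
  -- real part positivity
  have hQc : ContinuousOn (fun t => (1 + Complex.exp (γ t) * h (Complex.exp (γ t)) / (p:ℂ)))
      (Icc (0:ℝ) 1) := by
    apply ContinuousOn.add continuousOn_const
    apply ContinuousOn.div_const
    have hγc : ContinuousOn γ (Icc (0:ℝ) 1) :=
      (continuousOn_const.add ((Complex.continuous_ofReal.continuousOn).mul continuousOn_const))
    have hexpγ : ContinuousOn (fun t => Complex.exp (γ t)) (Icc (0:ℝ) 1) :=
      Complex.continuous_exp.comp_continuousOn hγc
    exact hexpγ.mul (hh.continuousOn.comp hexpγ (fun t ht => hγball t ht))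
  have hQi : IntervalIntegrable (fun t => (1 + Complex.exp (γ t) * h (Complex.exp (γ t)) / (p:ℂ)))
      MeasureTheory.volume 0 1 := hQc.intervalIntegrable_of_Icc (by norm_num)
  have hre0 : (∫ t in (0:ℝ)..1,
      ((1 + Complex.exp (γ t) * h (Complex.exp (γ t)) / (p:ℂ)).re)) = 0 := by
    have := Complex.reCLM.intervalIntegral_comp_comm hQi
    rw [hzero] at this
    simpa using this
  have hrepos : 0 < (∫ t in (0:ℝ)..1,
      ((1 + Complex.exp (γ t) * h (Complex.exp (γ t)) / (p:ℂ)).re)) := by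
    apply intervalIntegral_pos_of_pos_on
    · exact ((Complex.continuous_re.comp_continuousOn hQc).intervalIntegrable_of_Icc
        (by norm_num))
    · intro t ht
      exact hq _ (hγball t ⟨ht.1.le, ht.2.le⟩)
    · norm_num
  rw [hre0] at hrepos
  exact lt_irrefl _ hrepos


/-- if `f(z) = z^p + ⋯` is analytic on `D` with `f'(z) ≠ 0` for
`z ∈ D \ {0}` and `Re(1 + z f''(z)/f'(z)) > 0` on `D`, then `f = f0^p` for some
starlike univalent `f0`. -/
theorem pth_power_of_starlike (p : ℕ) (hp : 0 < p) (f : ℂ → ℂ)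
    (hf : DifferentiableOn ℂ f unitDisk)
    (hcoef : ∀ k < p, iteratedDeriv k f 0 = 0)
    (hcoefp : iteratedDeriv p f 0 = (p.factorial : ℂ))
    (hne : ∀ z ∈ unitDisk, z ≠ 0 → deriv f z ≠ 0)
    (hre : ∀ z ∈ unitDisk, 0 < (1 + z * deriv (deriv f) z / deriv f z).re) :
    ∃ f0 : ℂ → ℂ, IsStarlikeUnivalent f0 ∧ ∀ z ∈ unitDisk, f z = f0 z ^ p := by
  rw [unitDisk_eq] at hf hne hre
  have hpne : ((p:ℂ)) ≠ 0 := Nat.cast_ne_zero.2 hp.ne'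
  have hfa : AnalyticOnNhd ℂ f (Metric.ball (0:ℂ) 1) := hf.analyticOnNhd Metric.isOpen_ball
  obtain ⟨g, hga, hg0, hfac⟩ := factor_lemma p hp f hf hcoef hcoefp
  have hgne : ∀ z ∈ Metric.ball (0:ℂ) 1, g z ≠ 0 :=
    g_ne_zero p hp f g hfa hga hg0 hfac hne hre
  have hqpos : ∀ z ∈ Metric.ball (0:ℂ) 1, 0 < (1 + z * deriv g z / ((p:ℂ) * g z)).re := by
    intro z hz
    have hzlt : ‖z‖ < 1 := by rwa [Metric.mem_ball, dist_zero_right] at hz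
    refine core_pos p hp f g hfa hga hfac hne hre ‖z‖ hzlt ?_ z ?_
    · intro w hw
      rw [Metric.mem_closedBall, dist_zero_right] at hw
      exact hgne w (by rw [Metric.mem_ball, dist_zero_right]; linarith)
    · rw [Metric.mem_closedBall, dist_zero_right]
  set h : ℂ → ℂ := fun z => deriv g z / g z with hh_def
  have hh : AnalyticOnNhd ℂ h (Metric.ball (0:ℂ) 1) :=
    fun z hz => ((hga.deriv z hz).div (hga z hz) (hgne z hz))
  obtain ⟨L, hL0, hL⟩ := exists_primitive h hh
  have hexpL : ∀ z ∈ Metric.ball (0:ℂ) 1, Complex.exp (L z) = g z :=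
    exp_primitive g L hga hg0 hgne hL0 hL
  have hq_eq : ∀ z : ℂ, 1 + z * h z / (p:ℂ) = 1 + z * deriv g z / ((p:ℂ) * g z) := by
    intro z
    rw [hh_def]
    rw [← mul_div_assoc, div_div, mul_comm (g z) ((p:ℂ))]
  have hq2 : ∀ z ∈ Metric.ball (0:ℂ) 1, 0 < (1 + z * h z / (p:ℂ)).re := by
    intro z hz; rw [hq_eq]; exact hqpos z hz
  set f0 : ℂ → ℂ := fun z => z * Complex.exp (L z / (p:ℂ)) with hf0_def
  have hf0d : ∀ z ∈ Metric.ball (0:ℂ) 1, HasDerivAt f0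
      (Complex.exp (L z / (p:ℂ)) * (1 + z * deriv g z / ((p:ℂ) * g z))) z := by
    intro z hz
    have h1 : HasDerivAt (fun z => L z / (p:ℂ)) (h z / (p:ℂ)) z := (hL z hz).div_const _
    have h2 := h1.cexp
    have h3 := (hasDerivAt_id z).fun_mul h2
    rw [← hq_eq z]
    refine h3.congr_deriv ?_
    simp only [id_eq]
    ring
  have h0ball : (0:ℂ) ∈ Metric.ball (0:ℂ) 1 := by simp
  have hf00 : f0 0 = 0 := by simp [hf0_def]
  have hf0ne : ∀ z : ℂ, z ≠ 0 → f0 z ≠ 0 := by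
    intro z hz
    exact mul_ne_zero hz (Complex.exp_ne_zero _)
  have hderiv0 : deriv f0 0 = 1 := by
    rw [(hf0d 0 h0ball).deriv, hL0]
    simp
  -- the fundamental representation f0 z = exp (log z + L z / p) for z ≠ 0
  have hf0exp : ∀ z ∈ Metric.ball (0:ℂ) 1, z ≠ 0 →
      f0 z = Complex.exp (Complex.log z + L (Complex.exp (Complex.log z)) / (p:ℂ)) := by
    intro z hz hz0
    rw [Complex.exp_add, Complex.exp_log hz0, hf0_def]
  refine ⟨f0, ⟨?_, ?_, hf00, hderiv0, ?_⟩, ?_⟩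
  · -- differentiability
    rw [unitDisk_eq]
    exact fun z hz => (hf0d z hz).differentiableAt.differentiableWithinAt
  · -- injectivity
    rw [unitDisk_eq]
    intro z1 hz1 z2 hz2 heq
    rcases eq_or_ne z1 0 with rfl | hz1ne
    · rw [hf00] at heq
      by_contra hcon
      exact hf0ne z2 (fun h => hcon h.symm) heq.symm
    rcases eq_or_ne z2 0 with rfl | hz2ne
    · rw [hf00] at heq
      exact absurd heq (hf0ne z1 hz1ne)
    have habs1 : ‖z1‖ < 1 := by
      rw [Metric.mem_ball, dist_zero_right] at hz1; exact hz1
    have habs2 : ‖z2‖ < 1 := by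
      rw [Metric.mem_ball, dist_zero_right] at hz2; exact hz2
    have hre1 : (Complex.log z1).re < 0 := by
      rw [Complex.log_re]
      exact Real.log_neg (norm_pos_iff.2 hz1ne) habs1
    have hre2 : (Complex.log z2).re < 0 := by
      rw [Complex.log_re]
      exact Real.log_neg (norm_pos_iff.2 hz2ne) habs2
    have hfeq : Complex.exp (Complex.log z1 + L (Complex.exp (Complex.log z1)) / (p:ℂ)) =
        Complex.exp (Complex.log z2 + L (Complex.exp (Complex.log z2)) / (p:ℂ)) := by
      rw [← hf0exp z1 hz1 hz1ne, ← hf0exp z2 hz2 hz2ne]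
      exact heq
    obtain ⟨n, hn⟩ := Complex.exp_eq_exp_iff_exists_int.1 hfeq
    set u2' : ℂ := Complex.log z2 + (n:ℂ) * (2 * Real.pi * Complex.I) with hu2'_def
    have hexp2' : Complex.exp u2' = z2 := by
      rw [hu2'_def, Complex.exp_add, Complex.exp_int_mul_two_pi_mul_I, mul_one,
        Complex.exp_log hz2ne]
    have hre2' : u2'.re < 0 := by
      rw [hu2'_def, Complex.add_re]
      have : ((n:ℂ) * (2 * Real.pi * Complex.I)).re = 0 := by
        simp [Complex.mul_re]
      rw [this, add_zero]
      exact hre2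
    have hG : Complex.log z1 + L (Complex.exp (Complex.log z1)) / (p:ℂ) =
        u2' + L (Complex.exp u2') / (p:ℂ) := by
      rw [hn, hu2'_def]
      rw [show Complex.exp (Complex.log z2 + (n:ℂ) * (2 * Real.pi * Complex.I))
        = Complex.exp (Complex.log z2) by
          rw [Complex.exp_add, Complex.exp_int_mul_two_pi_mul_I, mul_one]]
      ring
    have huu := G_inj p hp h L hh hL hq2 hre1 hre2' hG
    rw [← Complex.exp_log hz1ne, ← hexp2', huu]
  · -- starlikeness
    rw [unitDisk_eq]
    intro z hz hz0
    have hrw : z * deriv f0 z / f0 z = 1 + z * deriv g z / ((p:ℂ) * g z) := by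
      rw [(hf0d z hz).deriv, hf0_def]
      field_simp [Complex.exp_ne_zero]
    rw [hrw]
    exact hqpos z hz
  · -- the power identity
    rw [unitDisk_eq]
    intro z hz
    rw [hfac z hz, hf0_def]
    rw [mul_pow, ← Complex.exp_nat_mul]
    congr 1
    rw [mul_div_cancel₀ _ hpne, hexpL z hz]
end
end

section
/- Let 0<β<1 and let f ∈ F(0,β), i.e. f is analytic on D with f(0)=0, f'(0)=1, f''(0)=0, f' nonvanishing on D, and Re(1+z f''(z)/f'(z))>β on D. Then the pre-Schwarzian norm of f satisfies ‖f‖ = sup_{z∈D} (1-|z|²)|f''(z)/f'(z)| ≤ 2(1-β). In fact, for every z∈D one has |f''(z)/f'(z)| ≤ 2(1-β)|z|/(1-|z|²). -/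
open Complex Set MeasureTheory Metric

noncomputable section

def qq (f : ℂ → ℂ) (z : ℂ) : ℂ := deriv (deriv f) z / deriv f z
def gg (f : ℂ → ℂ) (z : ℂ) : ℂ := z * qq f z
def om (f : ℂ → ℂ) (c : ℝ) (z : ℂ) : ℂ := gg f z / (gg f z + 2 * (c : ℂ))

lemma key (beta : ℝ) (hb0 : 0 < beta) (hb1 : beta < 1) (f : ℂ → ℂ)
    (hdf : DifferentiableOn ℂ f (ball 0 1))
    (hd1 : deriv f 0 = 1)
    (hd2 : deriv (deriv f) 0 = 0)
    (hnz : ∀ z ∈ ball (0:ℂ) 1, deriv f z ≠ 0)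
    (hre : ∀ z ∈ ball (0:ℂ) 1, beta < (1 + z * deriv (deriv f) z / deriv f z).re) :
    ∀ z ∈ ball (0:ℂ) 1, ‖deriv (deriv f) z / deriv f z‖
      ≤ 2 * (1 - beta) * ‖z‖ / (1 - ‖z‖ ^ 2) := by
  set c : ℝ := 1 - beta with hcdef
  have hcpos : 0 < c := by simp [hcdef]; linarith
  have h0mem : (0:ℂ) ∈ ball (0:ℂ) 1 := by simp
  -- differentiability
  have hAn : AnalyticOnNhd ℂ f (ball 0 1) := hdf.analyticOnNhd isOpen_ball
  have hq : DifferentiableOn ℂ (qq f) (ball (0:ℂ) 1) :=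
    (hAn.deriv.deriv.differentiableOn).div hAn.deriv.differentiableOn hnz
  have hg : DifferentiableOn ℂ (gg f) (ball (0:ℂ) 1) := by
    have := (differentiableOn_id (s := ball (0:ℂ) 1) (𝕜 := ℂ)).mul hq
    exact this
  -- real part bound on gg
  have hgre : ∀ z ∈ ball (0:ℂ) 1, -c < (gg f z).re := by
    intro z hz
    have h := hre z hz
    have hrw : (1 : ℂ) + z * deriv (deriv f) z / deriv f z = 1 + gg f z := by
      rw [gg, qq, mul_div_assoc]
    rw [hrw] at h
    simp only [Complex.add_re, Complex.one_re] at h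
    simp [hcdef]; linarith
  -- denominator nonzero
  have hden : ∀ z ∈ ball (0:ℂ) 1, gg f z + 2 * (c : ℂ) ≠ 0 := by
    intro z hz h
    have h2 : (gg f z + 2 * (c : ℂ)).re = (gg f z).re + 2 * c := by simp
    rw [h] at h2
    have := hgre z hz
    simp at h2
    linarith
  -- |om| < 1
  have hwlt : ∀ z ∈ ball (0:ℂ) 1, ‖om f c z‖ < 1 := by
    intro z hz
    have hsq : (‖gg f z‖) ^ 2 < (‖gg f z + 2 * (c:ℂ)‖) ^ 2 := by
      rw [Complex.sq_norm, Complex.sq_norm]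
      simp only [Complex.normSq_apply, Complex.add_re, Complex.add_im, Complex.mul_re,
        Complex.mul_im, Complex.ofReal_re, Complex.ofReal_im]
      simp only [Complex.re_ofNat, Complex.im_ofNat]
      have h := hgre z hz
      nlinarith [hcpos, mul_pos hcpos (show (0:ℝ) < (gg f z).re + c by linarith)]
    have hlt : ‖gg f z‖ < ‖gg f z + 2 * (c:ℂ)‖ :=
      lt_of_pow_lt_pow_left₀ 2 (norm_nonneg _) hsq
    rw [om, norm_div]
    exact div_lt_one ((norm_nonneg _).trans_lt hlt) |>.mpr hlt
  have hωdiff : DifferentiableOn ℂ (om f c) (ball (0:ℂ) 1) :=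
    hg.div (hg.add (differentiableOn_const _)) hden
  have hg0 : gg f 0 = 0 := by simp [gg]
  have hω0 : om f c 0 = 0 := by simp [om, hg0]
  -- deriv om at 0 is 0
  have hqat : DifferentiableAt ℂ (qq f) 0 := hq.differentiableAt (isOpen_ball.mem_nhds h0mem)
  have hgat : DifferentiableAt ℂ (gg f) 0 := hg.differentiableAt (isOpen_ball.mem_nhds h0mem)
  have hq0 : qq f 0 = 0 := by simp [qq, hd2]
  have hgd : deriv (gg f) 0 = 0 := by
    have : deriv (gg f) 0 = deriv (fun z => z * qq f z) 0 := rfl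
    rw [this, deriv_fun_mul (c := fun z => z) differentiableAt_id hqat]
    simp [hq0]
  have hωd : deriv (om f c) 0 = 0 := by
    have h1 : deriv (om f c) 0 =
        deriv (fun z => gg f z / (gg f z + 2 * (c:ℂ))) 0 := rfl
    rw [h1, deriv_fun_div (d := fun z => gg f z + 2 * (c:ℂ)) hgat (hgat.add (differentiableAt_const _)) (hden 0 h0mem)]
    simp [hg0, hgd]
  -- Schwarz I
  have hmaps : MapsTo (om f c) (ball (0:ℂ) 1) (ball (om f c 0) 1) := by
    rw [hω0]
    intro z hz
    simpa [mem_ball_zero_iff] using hwlt z hz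
  have hω₁diff : DifferentiableOn ℂ (dslope (om f c) 0) (ball (0:ℂ) 1) :=
    (differentiableOn_dslope (isOpen_ball.mem_nhds h0mem)).2 hωdiff
  have hω₁le : ∀ z ∈ ball (0:ℂ) 1, ‖dslope (om f c) 0 z‖ ≤ 1 := by
    intro z hz
    have := Complex.norm_dslope_le_div_of_mapsTo_ball hωdiff (hmaps.mono_right ball_subset_closedBall) hz
    simpa using this
  have hω₁0 : dslope (om f c) 0 0 = 0 := by rw [dslope_same]; exact hωd
  have hω₁lt : ∀ z ∈ ball (0:ℂ) 1, ‖dslope (om f c) 0 z‖ < 1 := by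
    intro z hz
    rcases lt_or_eq_of_le (hω₁le z hz) with h | h
    · exact h
    · exfalso
      have hmax : IsMaxOn (norm ∘ dslope (om f c) 0) (ball (0:ℂ) 1) z :=
        isMaxOn_iff.mpr fun w hw => by
          simpa [h] using hω₁le w hw
      have heq := Complex.eqOn_of_isPreconnected_of_isMaxOn_norm
        (convex_ball (0:ℂ) 1).isPreconnected isOpen_ball hω₁diff hz hmax h0mem
      simp only [Function.const_apply, hω₁0] at heq
      rw [← heq] at h
      simp at h
  -- Schwarz II
  have habs : ∀ z ∈ ball (0:ℂ) 1, ‖dslope (om f c) 0 z‖ ≤ ‖z‖ := by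
    intro z hz
    refine Complex.norm_le_norm_of_mapsTo_ball hω₁diff ?_ hω₁0 (by simpa [mem_ball_zero_iff] using hz)
    intro w hw
    simpa [mem_closedBall_zero_iff] using (hω₁lt w hw).le
  have hωsq : ∀ z ∈ ball (0:ℂ) 1, ‖om f c z‖ ≤ ‖z‖ ^ 2 := by
    intro z hz
    rcases eq_or_ne z 0 with rfl | hz0
    · simp [hω0]
    · have hds : dslope (om f c) 0 z = om f c z / z := by
        rw [dslope_of_ne _ hz0, slope_def_field, hω0, sub_zero, sub_zero]
      have := habs z hz
      rw [hds, norm_div] at this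
      have hzpos : 0 < ‖z‖ := by
        simpa [norm_pos_iff] using hz0
      rw [div_le_iff₀ hzpos] at this
      calc ‖om f c z‖ ≤ ‖z‖ * ‖z‖ := this
        _ = ‖z‖ ^ 2 := (sq _).symm
  -- conclude
  intro z hz
  have haz : ‖z‖ < 1 := by simpa [mem_ball_zero_iff] using hz
  have ha2 : ‖z‖ ^ 2 < 1 := by nlinarith [norm_nonneg z]
  have hden2 : (0:ℝ) < 1 - ‖z‖ ^ 2 := by linarith
  rcases eq_or_ne z 0 with rfl | hz0
  · rw [show deriv (deriv f) 0 / deriv f 0 = qq f 0 from rfl, hq0]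
    simp
  · have hzpos : 0 < ‖z‖ := by simpa [norm_pos_iff] using hz0
    -- identity gg * (1 - om) = 2c * om
    have hid : gg f z * (1 - om f c z) = 2 * (c:ℂ) * om f c z := by
      have hd := hden z hz
      rw [om]
      field_simp
      ring
    have h1ω : 1 - ‖z‖ ^ 2 ≤ ‖1 - om f c z‖ := by
      have h1 : ‖(1:ℂ)‖ - ‖om f c z‖ ≤ ‖1 - om f c z‖ := norm_sub_norm_le _ _
      have h2 := hωsq z hz
      simp only [norm_one] at h1
      linarith
    have habs_id : ‖gg f z‖ * ‖1 - om f c z‖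
        = 2 * c * ‖om f c z‖ := by
      have := congrArg norm hid
      rw [norm_mul, norm_mul, norm_mul] at this
      simpa [Complex.norm_real, Real.norm_eq_abs, abs_of_pos hcpos, Complex.norm_two] using this
    have hgb : ‖gg f z‖ * (1 - ‖z‖ ^ 2) ≤ 2 * c * ‖z‖ ^ 2 := by
      calc ‖gg f z‖ * (1 - ‖z‖ ^ 2)
          ≤ ‖gg f z‖ * ‖1 - om f c z‖ :=
            mul_le_mul_of_nonneg_left h1ω (norm_nonneg _)
        _ = 2 * c * ‖om f c z‖ := habs_id
        _ ≤ 2 * c * ‖z‖ ^ 2 :=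
            mul_le_mul_of_nonneg_left (hωsq z hz) (by positivity)
    have hggabs : ‖gg f z‖ = ‖z‖ * ‖qq f z‖ := by
      rw [gg, norm_mul]
    rw [hggabs] at hgb
    have hfinal : ‖qq f z‖ ≤ 2 * (1 - beta) * ‖z‖ / (1 - ‖z‖ ^ 2) := by
      rw [le_div_iff₀ hden2]
      rw [← hcdef]
      nlinarith [norm_nonneg (qq f z)]
    exact hfinal
/-- for `f ∈ F(0,β)` the pre-Schwarzian norm satisfies
`‖f‖ = sup_{z ∈ D} (1-|z|²)|f''(z)/f'(z)| ≤ 2(1-β)`; in fact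
`|f''(z)/f'(z)| ≤ 2(1-β)|z|/(1-|z|²)` for every `z ∈ D`. -/
theorem preSchwarzian_norm_le (beta : ℝ) (hbeta : 0 < beta ∧ beta < 1)
    (f : ℂ → ℂ) (hf : IsInF 0 beta f) :
    (∀ z ∈ unitDisk,
      ‖deriv (deriv f) z / deriv f z‖
        ≤ 2 * (1 - beta) * ‖z‖ / (1 - ‖z‖ ^ 2)) ∧
    sSup ((fun z => (1 - ‖z‖ ^ 2) *
        ‖deriv (deriv f) z / deriv f z‖) '' unitDisk)
      ≤ 2 * (1 - beta) := by
  obtain ⟨hdf, hf0, hd1, hd2, hnz, hre⟩ := hf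
  have hUb : unitDisk = Metric.ball (0:ℂ) 1 := by
    ext z
    simp [unitDisk, Metric.mem_ball, dist_zero_right]
  rw [hUb] at hdf hnz hre ⊢
  have hd2' : deriv (deriv f) 0 = 0 := by
    rw [hd2]; simp
  have hkey := key beta hbeta.1 hbeta.2 f hdf hd1 hd2' hnz hre
  constructor
  · exact hkey
  · apply Real.sSup_le
    · rintro x ⟨z, hz, rfl⟩
      simp only
      have haz : ‖z‖ < 1 := by
        simpa [Metric.mem_ball, dist_zero_right] using hz
      have ha2 : (0:ℝ) < 1 - ‖z‖ ^ 2 := by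
        nlinarith [norm_nonneg z]
      have h := hkey z hz
      rw [le_div_iff₀ ha2] at h
      have hb : 2 * (1 - beta) * ‖z‖ ≤ 2 * (1 - beta) := by
        nlinarith [norm_nonneg z, hbeta.2]
      calc (1 - ‖z‖ ^ 2) * ‖deriv (deriv f) z / deriv f z‖
          = ‖deriv (deriv f) z / deriv f z‖ * (1 - ‖z‖ ^ 2) := by ring
        _ ≤ 2 * (1 - beta) * ‖z‖ := h
        _ ≤ 2 * (1 - beta) := hb
    · linarith [hbeta.2]
end
end
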